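/- In the SVRG setting (F = (1/n)∑ f_i with each f_i convex and L-smooth, F_s^λ(x) = F(x) + (λ/2)‖x−s‖², x* = argmin_{x∈X} F_s^λ), the gradient estimator g(x) = ∇f_i(x) − ∇f_i(x_full) + ∇F(x_full) + λ(x−s) with uniform random i satisfies: E‖g(x) − ∇F_s^λ(x)‖² ≤ E‖∇f_i(x_full) − ∇f_i(x)‖² ≤ 4L·( V^F_{x*}(x_full) + V^{F_s^λ}_{x*}(x) ), where V^F_a(b) = F(b) − F(a) − ⟨∇F(a), b−a⟩. -/

import Mathlib

open scoped BigOperators RealInnerProductSpace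

variable {E : Type*} [NormedAddCommGroup E] [InnerProductSpace ℝ E] [CompleteSpace E]

/-- derivative along a line -/
lemma line_hasDerivAt (f : E → ℝ) (g : E → E) (hg : ∀ z, HasGradientAt f (g z) z)
    (w u : E) (t : ℝ) :
    HasDerivAt (fun t : ℝ => f (w + t • u)) ⟪g (w + t • u), u⟫ t := by
  have h1 : HasDerivAt (fun t : ℝ => w + t • u) u t := by
    simpa using ((hasDerivAt_id t).smul_const u).const_add w
  have h2 := (hg (w + t • u)).hasFDerivAt.comp_hasDerivAt t h1
  simpa [InnerProductSpace.toDual_apply_apply, Function.comp_def] using h2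

/-- first-order convexity inequality -/
lemma convex_grad_ineq (f : E → ℝ) (g : E → E) (hg : ∀ z, HasGradientAt f (g z) z)
    (hconv : ConvexOn ℝ Set.univ f) (w z : E) :
    f w + ⟪g w, z - w⟫ ≤ f z := by
  set h : ℝ → ℝ := fun t => f (w + t • (z - w)) with hh
  have hconvh : ConvexOn ℝ Set.univ h := by
    have := hconv.comp_affineMap (AffineMap.lineMap w z : ℝ →ᵃ[ℝ] E)
    have heq : h = f ∘ (AffineMap.lineMap w z : ℝ →ᵃ[ℝ] E) := by
      funext t; simp [hh, AffineMap.lineMap_apply]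
      congr 1
      module
    rw [heq]
    simpa using this
  have hd : HasDerivAt h ⟪g w, z - w⟫ 0 := by
    have := line_hasDerivAt f g hg w (z - w) 0
    simpa [hh] using this
  have hslope := hconvh.le_slope_of_hasDerivAt (Set.mem_univ 0) (Set.mem_univ 1)
    one_pos hd
  have : slope h 0 1 = h 1 - h 0 := by simp [slope_def_field]
  rw [this] at hslope
  have h0 : h 0 = f w := by simp [hh]
  have h1 : h 1 = f z := by simp [hh]
  rw [h0, h1] at hslope; linarith

/-- descent lemma -/
lemma descent_lemma (f : E → ℝ) (g : E → E) (hg : ∀ z, HasGradientAt f (g z) z)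
    (L : ℝ) (hL : 0 < L) (hlip : ∀ z w, ‖g z - g w‖ ≤ L * ‖z - w‖) (w z : E) :
    f z ≤ f w + ⟪g w, z - w⟫ + L / 2 * ‖z - w‖ ^ 2 := by
  set u := z - w with hu
  have hgc : Continuous g := by
    have : LipschitzWith (Real.toNNReal L) g := by
      apply LipschitzWith.of_dist_le_mul
      intro a b
      rw [dist_eq_norm, dist_eq_norm]
      calc ‖g a - g b‖ ≤ L * ‖a - b‖ := hlip a b
        _ = (Real.toNNReal L) * ‖a - b‖ := by rw [Real.coe_toNNReal _ hL.le]
    exact this.continuous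
  have hcont : Continuous (fun t : ℝ => ⟪g (w + t • u), u⟫) := by
    apply Continuous.inner
    · exact hgc.comp (by continuity)
    · exact continuous_const
  have hftc := intervalIntegral.integral_eq_sub_of_hasDerivAt
    (f := fun t : ℝ => f (w + t • u)) (f' := fun t : ℝ => ⟪g (w + t • u), u⟫)
    (a := 0) (b := 1) (fun t _ => line_hasDerivAt f g hg w u t)
    (hcont.intervalIntegrable 0 1)
  have hbound : ∫ t in (0:ℝ)..1, ⟪g (w + t • u), u⟫
      ≤ ∫ t in (0:ℝ)..1, (⟪g w, u⟫ + L * t * ‖u‖ ^ 2) := by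
    apply intervalIntegral.integral_mono_on zero_le_one (hcont.intervalIntegrable 0 1)
      ((by continuity : Continuous fun t : ℝ => (⟪g w, u⟫ + L * t * ‖u‖ ^ 2)).intervalIntegrable 0 1)
    intro t ht
    have h1 : ⟪g (w + t • u) - g w, u⟫ ≤ ‖g (w + t • u) - g w‖ * ‖u‖ :=
      real_inner_le_norm _ _
    have h2 : ‖g (w + t • u) - g w‖ ≤ L * ‖t • u‖ := by
      have := hlip (w + t • u) w
      simpa using this
    have h3 : ‖t • u‖ = t * ‖u‖ := by
      rw [norm_smul, Real.norm_eq_abs, abs_of_nonneg ht.1]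
    have h4 : ⟪g (w + t • u) - g w, u⟫ ≤ L * t * ‖u‖ ^ 2 := by
      calc ⟪g (w + t • u) - g w, u⟫ ≤ ‖g (w + t • u) - g w‖ * ‖u‖ := h1
        _ ≤ L * ‖t • u‖ * ‖u‖ := by
            apply mul_le_mul_of_nonneg_right h2 (norm_nonneg _)
        _ = L * t * ‖u‖ ^ 2 := by rw [h3]; ring
    have h5 : ⟪g (w + t • u), u⟫ = ⟪g w, u⟫ + ⟪g (w + t • u) - g w, u⟫ := by
      rw [inner_sub_left]; ring
    linarith
  have hval : ∫ t in (0:ℝ)..1, (⟪g w, u⟫ + L * t * ‖u‖ ^ 2)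
      = ⟪g w, u⟫ + L / 2 * ‖u‖ ^ 2 := by
    rw [intervalIntegral.integral_add (intervalIntegrable_const)]
    · rw [intervalIntegral.integral_const]
      have : ∫ t in (0:ℝ)..1, L * t * ‖u‖ ^ 2 = (L * ‖u‖ ^ 2) * ∫ t in (0:ℝ)..1, t := by
        rw [← intervalIntegral.integral_const_mul]
        congr 1; funext t; ring
      rw [this, integral_id]
      simp; ring
    · have : Continuous fun t : ℝ => L * t * ‖u‖ ^ 2 := by continuity
      exact this.intervalIntegrable 0 1
  have hz1 : w + (1:ℝ) • u = z := by simp [hu]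
  have hz0 : w + (0:ℝ) • u = w := by simp
  rw [hz1, hz0] at hftc
  have := hbound.trans_eq hval
  rw [hftc] at this
  linarith

/-- cocoercivity -/
lemma cocoercivity (f : E → ℝ) (g : E → E) (hg : ∀ z, HasGradientAt f (g z) z)
    (hconv : ConvexOn ℝ Set.univ f)
    (L : ℝ) (hL : 0 < L) (hlip : ∀ z w, ‖g z - g w‖ ≤ L * ‖z - w‖) (a b : E) :
    ‖g a - g b‖ ^ 2 ≤ 2 * L * (f a - f b - ⟪g b, a - b⟫) := by
  set v := g a - g b with hv
  set z := a - (L⁻¹ : ℝ) • v with hz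
  have h1 : f b + ⟪g b, z - b⟫ ≤ f z := convex_grad_ineq f g hg hconv b z
  have h2 : f z ≤ f a + ⟪g a, z - a⟫ + L / 2 * ‖z - a‖ ^ 2 :=
    descent_lemma f g hg L hL hlip a z
  have hza : z - a = -(L⁻¹ : ℝ) • v := by rw [hz]; module
  have hzb : z - b = (a - b) + (-(L⁻¹ : ℝ)) • v := by rw [hz]; module
  have e1 : ⟪g a, z - a⟫ = -(L⁻¹) * ⟪g a, v⟫ := by
    rw [hza, real_inner_smul_right]
  have e2 : ⟪g b, z - b⟫ = ⟪g b, a - b⟫ + (-(L⁻¹)) * ⟪g b, v⟫ := by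
    rw [hzb, inner_add_right, real_inner_smul_right]
  have e3 : ‖z - a‖ ^ 2 = L⁻¹ ^ 2 * ‖v‖ ^ 2 := by
    rw [hza, norm_smul]
    simp [mul_pow]
  have e4 : ⟪g a, v⟫ - ⟪g b, v⟫ = ‖v‖ ^ 2 := by
    rw [← inner_sub_left, ← hv, real_inner_self_eq_norm_sq]
  have hLinv : L * L⁻¹ = 1 := mul_inv_cancel₀ hL.ne'
  rw [e1, e3] at h2; rw [e2] at h1
  have e5 : L / 2 * (L⁻¹ ^ 2 * ‖v‖ ^ 2) = L⁻¹ * ‖v‖ ^ 2 / 2 := by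
    field_simp
  rw [e5] at h2
  have key : L⁻¹ * ‖v‖ ^ 2 / 2 ≤ f a - f b - ⟪g b, a - b⟫ := by
    have e6 : L⁻¹ * ⟪g a, v⟫ - L⁻¹ * ⟪g b, v⟫ = L⁻¹ * ‖v‖ ^ 2 := by
      rw [← mul_sub, e4]
    linarith
  have hmul := mul_le_mul_of_nonneg_left key (by positivity : (0:ℝ) ≤ 2 * L)
  have e7 : 2 * L * (L⁻¹ * ‖v‖ ^ 2 / 2) = ‖v‖ ^ 2 := by
    field_simp
  linarith


/-- Variance bound for the SVRG gradient estimator: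
E‖g(x) − ∇F_s^λ(x)‖² ≤ E‖∇f_i(x_full) − ∇f_i(x)‖² ≤ 4L(V^F_{x*}(x_full) + V^{F_s^λ}_{x*}(x)). -/
theorem stmt10 {d n : ℕ} (hn : 0 < n)
    (f : Fin n → EuclideanSpace ℝ (Fin d) → ℝ)
    (gf : Fin n → EuclideanSpace ℝ (Fin d) → EuclideanSpace ℝ (Fin d))
    (L : ℝ) (hL : 0 < L)
    (hgrad : ∀ i z, HasGradientAt (f i) (gf i z) z)
    (hconv : ∀ i, ConvexOn ℝ Set.univ (f i))
    (hlip : ∀ i z w, ‖gf i z - gf i w‖ ≤ L * ‖z - w‖)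
    (lam : ℝ) (hlam : 0 ≤ lam) (s : EuclideanSpace ℝ (Fin d))
    (X : Set (EuclideanSpace ℝ (Fin d))) (hXcl : IsClosed X) (hXc : Convex ℝ X)
    (F : EuclideanSpace ℝ (Fin d) → ℝ) (hF : ∀ z, F z = (n : ℝ)⁻¹ * ∑ i, f i z)
    (gF : EuclideanSpace ℝ (Fin d) → EuclideanSpace ℝ (Fin d))
    (hgF : ∀ z, gF z = (n : ℝ)⁻¹ • ∑ i, gf i z)
    (xstar : EuclideanSpace ℝ (Fin d)) (hxstar : xstar ∈ X)
    (hmin : ∀ z ∈ X, F xstar + lam / 2 * ‖xstar - s‖ ^ 2 ≤ F z + lam / 2 * ‖z - s‖ ^ 2)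
    (hvi : ∀ z ∈ X, 0 ≤ ⟪gF xstar + lam • (xstar - s), z - xstar⟫)
    (x xfull : EuclideanSpace ℝ (Fin d)) (hx : x ∈ X) (hxf : xfull ∈ X) :
    (n : ℝ)⁻¹ * ∑ i, ‖(gf i x - gf i xfull + gF xfull + lam • (x - s))
        - (gF x + lam • (x - s))‖ ^ 2
      ≤ (n : ℝ)⁻¹ * ∑ i, ‖gf i xfull - gf i x‖ ^ 2
    ∧ (n : ℝ)⁻¹ * ∑ i, ‖gf i xfull - gf i x‖ ^ 2
      ≤ 4 * L * ((F xfull - F xstar - ⟪gF xstar, xfull - xstar⟫)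
          + ((F x + lam / 2 * ‖x - s‖ ^ 2) - (F xstar + lam / 2 * ‖xstar - s‖ ^ 2)
              - ⟪gF xstar + lam • (xstar - s), x - xstar⟫)) := by
  have hn' : (0 : ℝ) < (n : ℝ) := by exact_mod_cast hn
  have hninv : (0 : ℝ) ≤ (n : ℝ)⁻¹ := by positivity
  set Z : Fin n → EuclideanSpace ℝ (Fin d) := fun i => gf i x - gf i xfull with hZ
  set m : EuclideanSpace ℝ (Fin d) := gF x - gF xfull with hm
  constructor
  · -- Part 1: variance reduction
    have hterm : ∀ i, (gf i x - gf i xfull + gF xfull + lam • (x - s))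
        - (gF x + lam • (x - s)) = Z i - m := by
      intro i; simp only [hZ, hm]; module
    have hmsum : ∑ i, Z i = (n : ℝ) • m := by
      rw [hm, hgF, hgF, ← smul_sub, ← Finset.sum_sub_distrib, smul_smul,
        mul_inv_cancel₀ hn'.ne', one_smul]
    have hexp : ∑ i, ‖Z i - m‖ ^ 2 = (∑ i, ‖Z i‖ ^ 2) - (n : ℝ) * ‖m‖ ^ 2 := by
      have h1 : ∀ i, ‖Z i - m‖ ^ 2 = ‖Z i‖ ^ 2 - 2 * ⟪Z i, m⟫ + ‖m‖ ^ 2 := fun i =>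
        norm_sub_sq_real _ _
      rw [Finset.sum_congr rfl fun i _ => h1 i]
      rw [Finset.sum_add_distrib, Finset.sum_sub_distrib, ← Finset.mul_sum,
        ← sum_inner, hmsum, real_inner_smul_left, real_inner_self_eq_norm_sq]
      simp [Finset.card_univ]
      ring
    have hZn : ∀ i, ‖gf i xfull - gf i x‖ ^ 2 = ‖Z i‖ ^ 2 := by
      intro i; rw [hZ]; simp [norm_sub_rev]
    calc (n : ℝ)⁻¹ * ∑ i, ‖(gf i x - gf i xfull + gF xfull + lam • (x - s))
        - (gF x + lam • (x - s))‖ ^ 2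
        = (n : ℝ)⁻¹ * ∑ i, ‖Z i - m‖ ^ 2 := by
          congr 1; exact Finset.sum_congr rfl fun i _ => by rw [hterm i]
      _ ≤ (n : ℝ)⁻¹ * ∑ i, ‖Z i‖ ^ 2 := by
          apply mul_le_mul_of_nonneg_left _ hninv
          rw [hexp]
          nlinarith [sq_nonneg ‖m‖, hn']
      _ = (n : ℝ)⁻¹ * ∑ i, ‖gf i xfull - gf i x‖ ^ 2 := by
          congr 1; exact Finset.sum_congr rfl fun i _ => (hZn i).symm
  · -- Part 2
    set B : EuclideanSpace ℝ (Fin d) → Fin n → ℝ :=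
      fun z i => f i z - f i xstar - ⟪gf i xstar, z - xstar⟫ with hB
    have hpt : ∀ i, ‖gf i xfull - gf i x‖ ^ 2 ≤ 4 * L * (B xfull i + B x i) := by
      intro i
      have h1 : ‖gf i xfull - gf i xstar‖ ^ 2 ≤ 2 * L * B xfull i :=
        cocoercivity (f i) (gf i) (hgrad i) (hconv i) L hL (hlip i) xfull xstar
      have h2 : ‖gf i x - gf i xstar‖ ^ 2 ≤ 2 * L * B x i :=
        cocoercivity (f i) (gf i) (hgrad i) (hconv i) L hL (hlip i) x xstar
      have h3 : ‖gf i xfull - gf i x‖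
          ≤ ‖gf i xfull - gf i xstar‖ + ‖gf i x - gf i xstar‖ := by
        have : gf i xfull - gf i x = (gf i xfull - gf i xstar) - (gf i x - gf i xstar) := by
          module
        rw [this]; exact norm_sub_le _ _
      nlinarith [norm_nonneg (gf i xfull - gf i x), norm_nonneg (gf i xfull - gf i xstar),
        norm_nonneg (gf i x - gf i xstar),
        sq_nonneg (‖gf i xfull - gf i xstar‖ - ‖gf i x - gf i xstar‖)]
    set VF : EuclideanSpace ℝ (Fin d) → ℝ :=
      fun z => F z - F xstar - ⟪gF xstar, z - xstar⟫ with hVF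
    have havg : ∀ z, (n : ℝ)⁻¹ * ∑ i, B z i = VF z := by
      intro z
      have hin : ⟪gF xstar, z - xstar⟫ = (n : ℝ)⁻¹ * ∑ i, ⟪gf i xstar, z - xstar⟫ := by
        rw [hgF, real_inner_smul_left, sum_inner]
      simp only [hB, hVF, Finset.sum_sub_distrib, hF, hin]
      ring
    have hsum : (n : ℝ)⁻¹ * ∑ i, ‖gf i xfull - gf i x‖ ^ 2
        ≤ 4 * L * (VF xfull + VF x) := by
      calc (n : ℝ)⁻¹ * ∑ i, ‖gf i xfull - gf i x‖ ^ 2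
          ≤ (n : ℝ)⁻¹ * ∑ i, 4 * L * (B xfull i + B x i) := by
            apply mul_le_mul_of_nonneg_left _ hninv
            exact Finset.sum_le_sum fun i _ => hpt i
        _ = 4 * L * ((n : ℝ)⁻¹ * ∑ i, B xfull i + (n : ℝ)⁻¹ * ∑ i, B x i) := by
            rw [← Finset.mul_sum, Finset.sum_add_distrib]; ring
        _ = 4 * L * (VF xfull + VF x) := by rw [havg, havg]
    have hnorm : ‖x - s‖ ^ 2 - ‖xstar - s‖ ^ 2 - 2 * ⟪xstar - s, x - xstar⟫
        = ‖x - xstar‖ ^ 2 := by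
      have hab : (x - xstar) + (xstar - s) = x - s := by module
      have := norm_add_sq_real (x - xstar) (xstar - s)
      rw [hab] at this
      rw [real_inner_comm]
      linarith
    have hinner : ⟪gF xstar + lam • (xstar - s), x - xstar⟫
        = ⟪gF xstar, x - xstar⟫ + lam * ⟪xstar - s, x - xstar⟫ := by
      rw [inner_add_left, real_inner_smul_left]
    rw [hinner]
    have hfin : 0 ≤ 4 * L * (lam / 2 * ‖x - xstar‖ ^ 2) := by positivity
    simp only [hVF] at hsum
    have hkey : 4 * L * ((F xfull - F xstar - ⟪gF xstar, xfull - xstar⟫)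
          + ((F x + lam / 2 * ‖x - s‖ ^ 2) - (F xstar + lam / 2 * ‖xstar - s‖ ^ 2)
              - (⟪gF xstar, x - xstar⟫ + lam * ⟪xstar - s, x - xstar⟫)))
        = 4 * L * (F xfull - F xstar - ⟪gF xstar, xfull - xstar⟫
            + (F x - F xstar - ⟪gF xstar, x - xstar⟫))
          + 4 * L * (lam / 2 * ‖x - xstar‖ ^ 2) := by
      linear_combination (2 * L * lam) * hnorm
    linarith [hsum, hfin, hkey]
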